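/- Let N be a positive integer and x a real number. Let A be the N×N real matrix (indices running from 1 to N) with entries a_{ij} = i(i+1) if i = j, a_{ij} = 2ix if i = j+1, a_{ij} = x²−1 if i = j+2, and a_{ij} = 0 otherwise, and let B be the N×N real matrix with entries b_{ij} = (-1)^{i-j} (j-1)! [(x+1)^{i-j+1} − (x−1)^{i-j+1}] / (2(i+1)!) if i ≥ j and b_{ij} = 0 if i < j. Then A·B = I and B·A = I, i.e. A is invertible with inverse B. -/
import Mathlib


private lemma factR (n : ℕ) : ((Nat.factorial (n+1) : ℝ)) = (n+1) * Nat.factorial n := by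
  exact_mod_cast Nat.factorial_succ n

private lemma factne (n : ℕ) : ((Nat.factorial n : ℝ)) ≠ 0 := by
  exact_mod_cast (Nat.factorial_pos n).ne'

/-- The tridiagonal (lower) matrix `A` with diagonal entries `i(i+1)`,
subdiagonal entries `2ix` and sub-subdiagonal entries `x² - 1` (1-based indices)
has inverse `B` with
`B i j = (-1)^(i-j) (j-1)! [(x+1)^(i-j+1) - (x-1)^(i-j+1)] / (2 (i+1)!)` for `i ≥ j`
and `0` otherwise. Here indices `i j : Fin N` correspond to the 1-based indices
`i+1`, `j+1`. -/
theorem tridiagonal_matrix_inverse (N : ℕ) (hN : 0 < N) (x : ℝ)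
    (A B : Matrix (Fin N) (Fin N) ℝ)
    (hA : ∀ i j : Fin N, A i j =
      if (i : ℕ) = (j : ℕ) then (((i : ℕ) + 1 : ℝ) * ((i : ℕ) + 2 : ℝ))
      else if (i : ℕ) = (j : ℕ) + 1 then 2 * ((i : ℕ) + 1 : ℝ) * x
      else if (i : ℕ) = (j : ℕ) + 2 then x ^ 2 - 1
      else 0)
    (hB : ∀ i j : Fin N, B i j =
      if (j : ℕ) ≤ (i : ℕ) then
        (-1 : ℝ) ^ ((i : ℕ) - (j : ℕ)) * (Nat.factorial (j : ℕ)) *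
          ((x + 1) ^ ((i : ℕ) - (j : ℕ) + 1) - (x - 1) ^ ((i : ℕ) - (j : ℕ) + 1)) /
          (2 * Nat.factorial ((i : ℕ) + 2))
      else 0) :
    A * B = 1 ∧ B * A = 1 := by
  have h1 : A * B = 1 := by
    ext i j
    rw [Matrix.mul_apply, Matrix.one_apply]
    rcases lt_trichotomy (i : ℕ) (j : ℕ) with hlt | heq | hgt
    · -- i < j : everything vanishes
      rw [if_neg (fun h => by subst h; omega)]
      apply Finset.sum_eq_zero
      intro k _
      rw [hA, hB]
      split_ifs <;> first | (exfalso; omega) | ring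
    · -- i = j
      have hij : i = j := Fin.ext heq
      subst hij
      rw [if_pos rfl]
      rw [Finset.sum_eq_single i]
      · rw [hA, hB, if_pos rfl, if_pos (le_refl _), Nat.sub_self]
        rw [show (i:ℕ)+2 = ((i:ℕ)+1)+1 from rfl, factR, factR]
        have hf := factne (i:ℕ)
        push_cast
        field_simp
        ring
      · intro k _ hk
        have h' : (k:ℕ) ≠ (i:ℕ) := fun h => hk (Fin.ext h)
        rw [hA, hB]
        split_ifs <;> first | (exfalso; omega) | ring
      · intro h; exact absurd (Finset.mem_univ i) h
    · -- i > j
      rw [if_neg (fun h => by subst h; omega)]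
      by_cases hd : (i:ℕ) = (j:ℕ) + 1
      · -- two terms
        have hij : i ≠ j := fun h => by subst h; omega
        have hz : ∀ k ∈ Finset.univ, k ∉ ({i, j} : Finset (Fin N)) → A i k * B k j = 0 := by
          intro k _ hk
          simp only [Finset.mem_insert, Finset.mem_singleton, not_or] at hk
          have h1' : (k:ℕ) ≠ (i:ℕ) := fun h => hk.1 (Fin.ext h)
          have h2' : (k:ℕ) ≠ (j:ℕ) := fun h => hk.2 (Fin.ext h)
          rw [hA, hB]
          split_ifs <;> first | (exfalso; omega) | ring
        rw [← Finset.sum_subset (Finset.subset_univ ({i, j} : Finset (Fin N))) hz,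
          Finset.sum_pair hij]
        have e1 : A i i = ((i:ℕ)+1:ℝ)*((i:ℕ)+2:ℝ) := by rw [hA, if_pos rfl]
        have e2 : B i j = (-1:ℝ)^1 * (Nat.factorial (j:ℕ)) *
            ((x+1)^2 - (x-1)^2) / (2 * Nat.factorial ((j:ℕ)+3)) := by
          rw [hB, if_pos (by omega), show (i:ℕ)-(j:ℕ) = 1 by omega,
            show (i:ℕ)+2 = (j:ℕ)+3 by omega]
        have e3 : A i j = 2 * ((i:ℕ)+1:ℝ) * x := by
          rw [hA, if_neg (by omega), if_pos hd]
        have e4 : B j j = (-1:ℝ)^0 * (Nat.factorial (j:ℕ)) *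
            ((x+1)^1 - (x-1)^1) / (2 * Nat.factorial ((j:ℕ)+2)) := by
          rw [hB, if_pos (le_refl _), Nat.sub_self]
        rw [e1, e2, e3, e4, show ((i:ℕ):ℝ) = ((j:ℕ):ℝ) + 1 by exact_mod_cast hd,
          show (j:ℕ)+3 = ((j:ℕ)+2)+1 from rfl, show (j:ℕ)+2 = ((j:ℕ)+1)+1 from rfl,
          factR, factR, factR]
        have hf := factne (j:ℕ)
        push_cast
        field_simp
        ring
      · -- three terms, d = e + 2
        have hd2 : (j:ℕ) + 2 ≤ (i:ℕ) := by omega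
        set e := (i:ℕ) - (j:ℕ) - 2 with he
        have hval : (i:ℕ) = (j:ℕ) + e + 2 := by omega
        have hlt1 : (j:ℕ) + e + 1 < N := by have := i.isLt; omega
        have hlt2 : (j:ℕ) + e < N := by omega
        set k1 : Fin N := ⟨(j:ℕ) + e + 1, hlt1⟩ with hk1
        set k2 : Fin N := ⟨(j:ℕ) + e, hlt2⟩ with hk2
        have ne1 : i ≠ k1 := by intro h; have := congrArg Fin.val h; simp [hk1] at this; omega
        have ne2 : i ≠ k2 := by intro h; have := congrArg Fin.val h; simp [hk2] at this; omega
        have ne3 : k1 ≠ k2 := by intro h; have := congrArg Fin.val h; simp [hk1, hk2] at this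
        have hz : ∀ k ∈ Finset.univ, k ∉ ({i, k1, k2} : Finset (Fin N)) → A i k * B k j = 0 := by
          intro k _ hk
          simp only [Finset.mem_insert, Finset.mem_singleton, not_or] at hk
          have h1' : (k:ℕ) ≠ (i:ℕ) := fun h => hk.1 (Fin.ext h)
          have h2' : (k:ℕ) ≠ (j:ℕ) + e + 1 := fun h => hk.2.1 (Fin.ext h)
          have h3' : (k:ℕ) ≠ (j:ℕ) + e := fun h => hk.2.2 (Fin.ext h)
          rw [hA, hB]
          split_ifs <;> first | (exfalso; omega) | ring
        rw [← Finset.sum_subset (Finset.subset_univ ({i, k1, k2} : Finset (Fin N))) hz,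
          Finset.sum_insert (by simp [ne1, ne2]), Finset.sum_pair ne3]
        have e1 : A i i = ((i:ℕ)+1:ℝ)*((i:ℕ)+2:ℝ) := by rw [hA, if_pos rfl]
        have e2 : B i j = (-1:ℝ)^(e+2) * (Nat.factorial (j:ℕ)) *
            ((x+1)^(e+3) - (x-1)^(e+3)) / (2 * Nat.factorial ((j:ℕ)+e+4)) := by
          rw [hB, if_pos (by omega), show (i:ℕ)-(j:ℕ) = e+2 by omega,
            show (i:ℕ)+2 = (j:ℕ)+e+4 by omega, show e+2+1 = e+3 from rfl]
        have e3 : A i k1 = 2 * ((i:ℕ)+1:ℝ) * x := by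
          rw [hA, if_neg (by simp [hk1]; omega), if_pos (by simp [hk1]; omega)]
        have e4 : B k1 j = (-1:ℝ)^(e+1) * (Nat.factorial (j:ℕ)) *
            ((x+1)^(e+2) - (x-1)^(e+2)) / (2 * Nat.factorial ((j:ℕ)+e+3)) := by
          rw [hB]
          simp only [hk1]
          rw [if_pos (by omega), show (j:ℕ)+e+1-(j:ℕ) = e+1 by omega,
            show (j:ℕ)+e+1+2 = (j:ℕ)+e+3 from rfl, show e+1+1 = e+2 from rfl]
        have e5 : A i k2 = x^2 - 1 := by
          rw [hA, if_neg (by simp [hk2]; omega), if_neg (by simp [hk2]; omega),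
            if_pos (by simp [hk2]; omega)]
        have e6 : B k2 j = (-1:ℝ)^e * (Nat.factorial (j:ℕ)) *
            ((x+1)^(e+1) - (x-1)^(e+1)) / (2 * Nat.factorial ((j:ℕ)+e+2)) := by
          rw [hB]
          simp only [hk2]
          rw [if_pos (by omega), show (j:ℕ)+e-(j:ℕ) = e by omega]
        rw [e1, e2, e3, e4, e5, e6,
          show ((i:ℕ):ℝ) = ((j:ℕ):ℝ) + e + 2 by exact_mod_cast hval,
          show (j:ℕ)+e+4 = (((j:ℕ)+e+3))+1 from rfl,
          show (j:ℕ)+e+3 = (((j:ℕ)+e+2))+1 from rfl,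
          show (j:ℕ)+e+2 = (((j:ℕ)+e+1))+1 from rfl,
          show (j:ℕ)+e+1 = (((j:ℕ)+e))+1 from rfl,
          factR, factR, factR, factR]
        have hf := factne ((j:ℕ)+e)
        push_cast
        field_simp
        ring
  exact ⟨h1, mul_eq_one_comm.mp h1⟩
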